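/- Let Γ ≤ Isom(ℝ³) be generated by the translations t_{(a,0,0)}, t_{(0,b,0)} and the glide reflection σ: (x,y,z) ↦ (x, y, z + c/2) composed with reflection in the plane x = 0, i.e. σ(x,y,z) = (−x, y, z + c/2) (group of the manifold B₁, a,b,c > 0). Then the translation t_{(a/2,0,0)} normalizes Γ, its square is in Γ, it is not in Γ, and the group generated by Γ and t_{(a/2,0,0)} acts freely on ℝ³. -/

import Mathlib

noncomputable section

/-- Euclidean space `E^n`. -/
abbrev E (n : ℕ) : Type := EuclideanSpace ℝ (Fin n)

/-- Discreteness of a group of isometries, expressed as proper discontinuity of its action. -/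
def IsDiscreteGrp {n : ℕ} (Γ : Subgroup (E n ≃ᵢ E n)) : Prop :=
  ∀ K : Set (E n), IsCompact K →
    {γ : E n ≃ᵢ E n | γ ∈ Γ ∧ ((γ '' K) ∩ K).Nonempty}.Finite

/-- Cocompactness of a group of isometries of `E^n`. -/
def IsCocompactGrp {n : ℕ} (Γ : Subgroup (E n ≃ᵢ E n)) : Prop :=
  ∃ K : Set (E n), IsCompact K ∧ ∀ x : E n, ∃ γ ∈ Γ, γ x ∈ K

/-- The action of `Γ` on `E^n` is free. -/
def ActsFreely {n : ℕ} (Γ : Subgroup (E n ≃ᵢ E n)) : Prop :=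
  ∀ γ ∈ Γ, (∃ x : E n, γ x = x) → γ = 1

/-- A crystallographic group: discrete and cocompact. -/
def IsCrystallographic {n : ℕ} (Γ : Subgroup (E n ≃ᵢ E n)) : Prop :=
  IsDiscreteGrp Γ ∧ IsCocompactGrp Γ

/-- A Bieberbach group: discrete, cocompact, acting freely. -/
def IsBieberbach {n : ℕ} (Γ : Subgroup (E n ≃ᵢ E n)) : Prop :=
  IsDiscreteGrp Γ ∧ IsCocompactGrp Γ ∧ ActsFreely Γ

/-- `f` is a translation. -/
def IsTranslation {n : ℕ} (f : E n ≃ᵢ E n) : Prop :=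
  ∃ a : E n, ∀ x : E n, f x = x + a

namespace B1Aux

/-- Elements of the (extended) B₁ group: translations and glide reflections on the lattice
with x-step `s`. -/
def Pform (s b c : ℝ) (γ : E 3 ≃ᵢ E 3) : Prop :=
  (∃ m n k : ℤ, ∀ x : E 3, γ x = ![x 0 + m * s, x 1 + n * b, x 2 + k * c]) ∨
  (∃ m n k : ℤ, ∀ x : E 3, γ x = ![-(x 0) + m * s, x 1 + n * b, x 2 + k * c + c / 2])

lemma vec3_eq {u v w u' v' w' : ℝ} (h0 : u = u') (h1 : v = v') (h2 : w = w') :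
    (![u,v,w] : Fin 3 → ℝ) = ![u',v',w'] := by subst h0 h1 h2; rfl

lemma pform_one (s b c : ℝ) : Pform s b c 1 := by
  refine Or.inl ⟨0, 0, 0, fun x => ?_⟩
  show x.ofLp = _
  have : (![x 0, x 1, x 2] : Fin 3 → ℝ) = x.ofLp := by funext i; fin_cases i <;> rfl
  rw [← this]
  exact vec3_eq (by simp only [Matrix.cons_val_zero, Matrix.cons_val_one, Matrix.head_cons, Matrix.cons_val_two, Matrix.tail_cons]; push_cast; ring) (by simp only [Matrix.cons_val_zero, Matrix.cons_val_one, Matrix.head_cons, Matrix.cons_val_two, Matrix.tail_cons]; push_cast; ring) (by simp only [Matrix.cons_val_zero, Matrix.cons_val_one, Matrix.head_cons, Matrix.cons_val_two, Matrix.tail_cons]; push_cast; ring)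

lemma pform_mul {s b c : ℝ} {γ δ : E 3 ≃ᵢ E 3} (hγ : Pform s b c γ) (hδ : Pform s b c δ) :
    Pform s b c (γ * δ) := by
  have happ : ∀ x : E 3, (γ * δ) x = γ (δ x) := fun _ => rfl
  rcases hγ with ⟨m, n, k, hg⟩ | ⟨m, n, k, hg⟩ <;>
    rcases hδ with ⟨m', n', k', hd⟩ | ⟨m', n', k', hd⟩
  · refine Or.inl ⟨m + m', n + n', k + k', fun x => ?_⟩
    rw [happ, hg, hd]
    exact vec3_eq (by simp only [Matrix.cons_val_zero, Matrix.cons_val_one, Matrix.head_cons, Matrix.cons_val_two, Matrix.tail_cons]; push_cast; ring) (by simp only [Matrix.cons_val_zero, Matrix.cons_val_one, Matrix.head_cons, Matrix.cons_val_two, Matrix.tail_cons]; push_cast; ring) (by simp only [Matrix.cons_val_zero, Matrix.cons_val_one, Matrix.head_cons, Matrix.cons_val_two, Matrix.tail_cons]; push_cast; ring)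
  · refine Or.inr ⟨m + m', n + n', k + k', fun x => ?_⟩
    rw [happ, hg, hd]
    exact vec3_eq (by simp only [Matrix.cons_val_zero, Matrix.cons_val_one, Matrix.head_cons, Matrix.cons_val_two, Matrix.tail_cons]; push_cast; ring) (by simp only [Matrix.cons_val_zero, Matrix.cons_val_one, Matrix.head_cons, Matrix.cons_val_two, Matrix.tail_cons]; push_cast; ring) (by simp only [Matrix.cons_val_zero, Matrix.cons_val_one, Matrix.head_cons, Matrix.cons_val_two, Matrix.tail_cons]; push_cast; ring)
  · refine Or.inr ⟨m - m', n + n', k + k', fun x => ?_⟩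
    rw [happ, hg, hd]
    exact vec3_eq (by simp only [Matrix.cons_val_zero, Matrix.cons_val_one, Matrix.head_cons, Matrix.cons_val_two, Matrix.tail_cons]; push_cast; ring) (by simp only [Matrix.cons_val_zero, Matrix.cons_val_one, Matrix.head_cons, Matrix.cons_val_two, Matrix.tail_cons]; push_cast; ring) (by simp only [Matrix.cons_val_zero, Matrix.cons_val_one, Matrix.head_cons, Matrix.cons_val_two, Matrix.tail_cons]; push_cast; ring)
  · refine Or.inl ⟨m - m', n + n', k + k' + 1, fun x => ?_⟩
    rw [happ, hg, hd]
    exact vec3_eq (by simp only [Matrix.cons_val_zero, Matrix.cons_val_one, Matrix.head_cons, Matrix.cons_val_two, Matrix.tail_cons]; push_cast; ring) (by simp only [Matrix.cons_val_zero, Matrix.cons_val_one, Matrix.head_cons, Matrix.cons_val_two, Matrix.tail_cons]; push_cast; ring) (by simp only [Matrix.cons_val_zero, Matrix.cons_val_one, Matrix.head_cons, Matrix.cons_val_two, Matrix.tail_cons]; push_cast; ring)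

lemma pform_inv {s b c : ℝ} {γ : E 3 ≃ᵢ E 3} (hγ : Pform s b c γ) :
    Pform s b c γ⁻¹ := by
  rcases hγ with ⟨m, n, k, hg⟩ | ⟨m, n, k, hg⟩
  · refine Or.inl ⟨-m, -n, -k, fun x => ?_⟩
    have h1 : (γ (WithLp.toLp 2 ![x 0 + (-m : ℤ) * s, x 1 + (-n : ℤ) * b, x 2 + (-k : ℤ) * c] : E 3)).ofLp = x.ofLp := by
      rw [hg, WithLp.ofLp_toLp]
      have : (![x 0, x 1, x 2] : Fin 3 → ℝ) = x.ofLp := by funext i; fin_cases i <;> rfl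
      rw [← this]
      exact vec3_eq (by simp only [Matrix.cons_val_zero, Matrix.cons_val_one, Matrix.head_cons, Matrix.cons_val_two, Matrix.tail_cons]; push_cast; ring) (by simp only [Matrix.cons_val_zero, Matrix.cons_val_one, Matrix.head_cons, Matrix.cons_val_two, Matrix.tail_cons]; push_cast; ring) (by simp only [Matrix.cons_val_zero, Matrix.cons_val_one, Matrix.head_cons, Matrix.cons_val_two, Matrix.tail_cons]; push_cast; ring)
    have h2 := γ.symm_apply_apply (WithLp.toLp 2 ![x 0 + (-m : ℤ) * s, x 1 + (-n : ℤ) * b, x 2 + (-k : ℤ) * c] : E 3)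
    rw [WithLp.ofLp_injective 2 h1] at h2
    exact congrArg WithLp.ofLp h2
  · refine Or.inr ⟨m, -n, -k - 1, fun x => ?_⟩
    have h1 : (γ (WithLp.toLp 2 ![-(x 0) + (m : ℤ) * s, x 1 + (-n : ℤ) * b,
        x 2 + ((-k - 1 : ℤ)) * c + c / 2] : E 3)).ofLp = x.ofLp := by
      rw [hg, WithLp.ofLp_toLp]
      have : (![x 0, x 1, x 2] : Fin 3 → ℝ) = x.ofLp := by funext i; fin_cases i <;> rfl
      rw [← this]
      exact vec3_eq (by simp only [Matrix.cons_val_zero, Matrix.cons_val_one, Matrix.head_cons, Matrix.cons_val_two, Matrix.tail_cons]; push_cast; ring) (by simp only [Matrix.cons_val_zero, Matrix.cons_val_one, Matrix.head_cons, Matrix.cons_val_two, Matrix.tail_cons]; push_cast; ring) (by simp only [Matrix.cons_val_zero, Matrix.cons_val_one, Matrix.head_cons, Matrix.cons_val_two, Matrix.tail_cons]; push_cast; ring)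
    have h2 := γ.symm_apply_apply (WithLp.toLp 2 ![-(x 0) + (m : ℤ) * s, x 1 + (-n : ℤ) * b,
        x 2 + ((-k - 1 : ℤ)) * c + c / 2] : E 3)
    rw [WithLp.ofLp_injective 2 h1] at h2
    exact congrArg WithLp.ofLp h2

lemma pform_closure {s b c : ℝ} {S : Set (E 3 ≃ᵢ E 3)} (hS : ∀ g ∈ S, Pform s b c g) :
    ∀ γ ∈ Subgroup.closure S, Pform s b c γ := by
  intro γ hγ
  refine Subgroup.closure_induction (p := fun g _ => Pform s b c g) hS (pform_one s b c)
    (fun x y _ _ hx hy => pform_mul hx hy) (fun x _ hx => pform_inv hx) hγ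

end B1Aux

open B1Aux in
/-- for the fundamental group `Γ` of the flat manifold `B₁`, generated
by the translations by `(a,0,0)`, `(0,b,0)` and the glide reflection
`σ : (x,y,z) ↦ (-x, y, z + c/2)`, the translation `τ = t_{(a/2,0,0)}` normalizes `Γ`,
`τ² ∈ Γ`, `τ ∉ Γ`, and the group `⟨Γ, τ⟩` acts freely on `ℝ³`. -/
theorem B1_admissible_translation (a b c : ℝ) (ha : 0 < a) (hb : 0 < b) (hc : 0 < c)
    (t₁ t₂ σ τ : E 3 ≃ᵢ E 3)
    (ht₁ : ∀ x : E 3, t₁ x = ![x 0 + a, x 1, x 2])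
    (ht₂ : ∀ x : E 3, t₂ x = ![x 0, x 1 + b, x 2])
    (hσ : ∀ x : E 3, σ x = ![-(x 0), x 1, x 2 + c / 2])
    (hτ : ∀ x : E 3, τ x = ![x 0 + a / 2, x 1, x 2]) :
    (∀ δ ∈ Subgroup.closure {t₁, t₂, σ}, τ * δ * τ⁻¹ ∈ Subgroup.closure {t₁, t₂, σ}) ∧
    τ ^ 2 ∈ Subgroup.closure {t₁, t₂, σ} ∧
    τ ∉ Subgroup.closure {t₁, t₂, σ} ∧
    ActsFreely (Subgroup.closure
      ((Subgroup.closure {t₁, t₂, σ} : Subgroup (E 3 ≃ᵢ E 3)) ∪ {τ} : Set (E 3 ≃ᵢ E 3))) := by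
  have happ : ∀ (f g : E 3 ≃ᵢ E 3) (x : E 3), (f * g) x = f (g x) := fun _ _ _ => rfl
  have hvec : ∀ x : E 3, (![x 0, x 1, x 2] : Fin 3 → ℝ) = x.ofLp := fun x => by
    funext i; fin_cases i <;> rfl
  have hane : a ≠ 0 := ne_of_gt ha
  -- commutation relations
  have hcomm1 : τ * t₁ = t₁ * τ := by
    refine IsometryEquiv.ext fun x => WithLp.ofLp_injective 2 ?_
    rw [happ, happ, hτ, ht₁ x, ht₁, hτ x]
    exact vec3_eq (by simp only [Matrix.cons_val_zero]; ring)
      (by simp only [Matrix.cons_val_one, Matrix.head_cons]) rfl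
  have hcomm2 : τ * t₂ = t₂ * τ := by
    refine IsometryEquiv.ext fun x => WithLp.ofLp_injective 2 ?_
    rw [happ, happ, hτ, ht₂ x, ht₂, hτ x]
    exact vec3_eq (by simp only [Matrix.cons_val_zero]) 
      (by simp only [Matrix.cons_val_one, Matrix.head_cons, Matrix.cons_val_zero]) rfl
  have hcomm3 : τ * σ = (t₁ * σ) * τ := by
    refine IsometryEquiv.ext fun x => WithLp.ofLp_injective 2 ?_
    rw [happ, happ, happ, hτ, hσ x, ht₁, hσ, hτ x]
    exact vec3_eq
      (by simp only [Matrix.cons_val_zero]; ring)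
      (by simp only [Matrix.cons_val_one, Matrix.head_cons, Matrix.cons_val_zero])
      (by simp only [Matrix.cons_val_two, Matrix.tail_cons, Matrix.head_cons])
  have htausq : τ ^ 2 = t₁ := by
    rw [pow_two]
    refine IsometryEquiv.ext fun x => WithLp.ofLp_injective 2 ?_
    rw [happ, hτ, hτ x, ht₁]
    exact vec3_eq (by simp only [Matrix.cons_val_zero]; ring)
      (by simp only [Matrix.cons_val_one, Matrix.head_cons, Matrix.cons_val_zero]) rfl
  refine ⟨?_, ?_, ?_, ?_⟩
  · -- normalizer
    intro δ hδ
    refine Subgroup.closure_induction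
      (p := fun g _ => τ * g * τ⁻¹ ∈ Subgroup.closure {t₁, t₂, σ}) ?_ ?_ ?_ ?_ hδ
    · intro g hg
      rcases hg with rfl | rfl | rfl
      · rw [hcomm1, mul_inv_cancel_right]
        exact Subgroup.subset_closure (by simp)
      · rw [hcomm2, mul_inv_cancel_right]
        exact Subgroup.subset_closure (by simp)
      · rw [hcomm3, mul_inv_cancel_right]
        exact mul_mem (Subgroup.subset_closure (by simp)) (Subgroup.subset_closure (by simp))
    · have h1 : τ * 1 * τ⁻¹ = 1 := by group
      show τ * 1 * τ⁻¹ ∈ Subgroup.closure {t₁, t₂, σ}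
      rw [h1]; exact one_mem _
    · intro x y _ _ hx hy
      have : τ * (x * y) * τ⁻¹ = (τ * x * τ⁻¹) * (τ * y * τ⁻¹) := by group
      rw [this]; exact mul_mem hx hy
    · intro x _ hx
      have : τ * x⁻¹ * τ⁻¹ = (τ * x * τ⁻¹)⁻¹ := by group
      rw [this]; exact inv_mem hx
  · -- τ² ∈ Γ
    rw [htausq]
    exact Subgroup.subset_closure (by simp)
  · -- τ ∉ Γ
    intro hmem
    have hform : Pform a b c τ := by
      refine pform_closure (fun g hg => ?_) τ hmem
      rcases hg with rfl | rfl | rfl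
      · refine Or.inl ⟨1, 0, 0, fun x => ?_⟩
        rw [ht₁]
        exact vec3_eq (by push_cast; ring) (by push_cast; ring) (by push_cast; ring)
      · refine Or.inl ⟨0, 1, 0, fun x => ?_⟩
        rw [ht₂]
        exact vec3_eq (by push_cast; ring) (by push_cast; ring) (by push_cast; ring)
      · refine Or.inr ⟨0, 0, 0, fun x => ?_⟩
        rw [hσ]
        exact vec3_eq (by push_cast; ring) (by push_cast; ring) (by push_cast; ring)
    have key : ∃ m : ℤ, (m : ℝ) * a = a / 2 := by
      rcases hform with ⟨m, n, k, hg⟩ | ⟨m, n, k, hg⟩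
      · have h0 : (0 : E 3) 0 + (m : ℝ) * a = (0 : E 3) 0 + a / 2 :=
          congrFun ((hg 0).symm.trans (hτ 0)) 0
        exact ⟨m, by linarith⟩
      · have h0 : -((0 : E 3) 0) + (m : ℝ) * a = (0 : E 3) 0 + a / 2 :=
          congrFun ((hg 0).symm.trans (hτ 0)) 0
        have hz : (0 : E 3) 0 = 0 := rfl
        rw [hz] at h0
        exact ⟨m, by linarith⟩
    obtain ⟨m, hm⟩ := key
    have h2 : ((2 * m - 1 : ℤ) : ℝ) * a = 0 := by push_cast; linarith
    rcases mul_eq_zero.mp h2 with h | h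
    · have : (2 * m - 1 : ℤ) = 0 := by exact_mod_cast h
      omega
    · exact hane h
  · -- freeness
    intro γ hγ hfix
    obtain ⟨x, hx⟩ := hfix
    have hform : Pform (a / 2) b c γ := by
      refine pform_closure (fun g hg => ?_) γ hγ
      rcases hg with hg | hg
      · refine pform_closure (fun g' hg' => ?_) g hg
        rcases hg' with rfl | rfl | rfl
        · refine Or.inl ⟨2, 0, 0, fun x => ?_⟩
          rw [ht₁]
          exact vec3_eq (by push_cast; ring) (by push_cast; ring) (by push_cast; ring)
        · refine Or.inl ⟨0, 1, 0, fun x => ?_⟩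
          rw [ht₂]
          exact vec3_eq (by push_cast; ring) (by push_cast; ring) (by push_cast; ring)
        · refine Or.inr ⟨0, 0, 0, fun x => ?_⟩
          rw [hσ]
          exact vec3_eq (by push_cast; ring) (by push_cast; ring) (by push_cast; ring)
      · rcases hg with rfl
        refine Or.inl ⟨1, 0, 0, fun x => ?_⟩
        rw [hτ]
        exact vec3_eq (by push_cast; ring) (by push_cast; ring) (by push_cast; ring)
    rcases hform with ⟨m, n, k, hg⟩ | ⟨m, n, k, hg⟩
    · -- translation case
      have h0 : x 0 + (m : ℝ) * (a / 2) = x 0 := congrFun ((hg x).symm.trans (congrArg WithLp.ofLp hx)) 0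
      have h1 : x 1 + (n : ℝ) * b = x 1 := congrFun ((hg x).symm.trans (congrArg WithLp.ofLp hx)) 1
      have h2 : x 2 + (k : ℝ) * c = x 2 := congrFun ((hg x).symm.trans (congrArg WithLp.ofLp hx)) 2
      have hm : (m : ℝ) = 0 := by
        rcases mul_eq_zero.mp (show (m : ℝ) * (a / 2) = 0 by linarith) with h | h
        · exact h
        · exfalso; linarith
      have hn : (n : ℝ) = 0 := by
        rcases mul_eq_zero.mp (show (n : ℝ) * b = 0 by linarith) with h | h
        · exact h
        · exfalso; linarith
      have hk : (k : ℝ) = 0 := by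
        rcases mul_eq_zero.mp (show (k : ℝ) * c = 0 by linarith) with h | h
        · exact h
        · exfalso; linarith
      refine IsometryEquiv.ext fun y => WithLp.ofLp_injective 2 ?_
      have h1y : (1 : E 3 ≃ᵢ E 3) y = y := rfl
      rw [hg y, h1y, ← hvec y]
      exact vec3_eq (by simp only [Matrix.cons_val_zero, Matrix.cons_val_one, Matrix.head_cons, Matrix.cons_val_two, Matrix.tail_cons]; rw [hm]; ring) (by simp only [Matrix.cons_val_zero, Matrix.cons_val_one, Matrix.head_cons, Matrix.cons_val_two, Matrix.tail_cons]; rw [hn]; ring) (by simp only [Matrix.cons_val_zero, Matrix.cons_val_one, Matrix.head_cons, Matrix.cons_val_two, Matrix.tail_cons]; rw [hk]; ring)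
    · -- flip case: impossible
      exfalso
      have h2 : x 2 + (k : ℝ) * c + c / 2 = x 2 := congrFun ((hg x).symm.trans (congrArg WithLp.ofLp hx)) 2
      have hkc : ((2 * k + 1 : ℤ) : ℝ) * c = 0 := by push_cast; linarith
      rcases mul_eq_zero.mp hkc with h | h
      · have : (2 * k + 1 : ℤ) = 0 := by exact_mod_cast h
        omega
      · linarith
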